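/- A complex-valued harmonic function f on 𝔻 satisfies sup_{z≠w} |f(z)-f(w)|/σ(z,w) < ∞ if and only if sup_{z∈𝔻}(1-|z|²)Λ_f(z) < ∞, where σ(z,w) = arctanh(ρ(z,w)) is the hyperbolic distance and ρ(z,w) = |(z-w)/(1-w̄z)|. -/

import Mathlib

open Complex Metric Set Filter Topology

noncomputable def Complex.abs : AbsoluteValue ℂ ℝ where
  toFun z := ‖z‖
  map_mul' := norm_mul
  nonneg' := norm_nonneg
  eq_zero' _ := norm_eq_zero
  add_le' := norm_add_le

theorem Complex.abs_apply (z : ℂ) : Complex.abs z = ‖z‖ := rfl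

theorem Complex.norm_eq_abs (z : ℂ) : ‖z‖ = Complex.abs z := rfl

theorem Complex.sq_abs (z : ℂ) : Complex.abs z ^ 2 = Complex.normSq z := Complex.sq_norm z

theorem Complex.abs_conj (z : ℂ) : Complex.abs ((starRingEnd ℂ) z) = Complex.abs z :=
  Complex.norm_conj z

theorem Complex.abs_ofReal (r : ℝ) : Complex.abs (r : ℂ) = |r| := by
  simp [Complex.abs_apply]

@[simp] theorem Complex.abs_two : Complex.abs 2 = 2 := by
  simp [Complex.abs_apply]

theorem Complex.abs_I : Complex.abs Complex.I = 1 := by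
  simp [Complex.abs_apply]


lemma sq_id (a b : ℂ) : Complex.normSq (1 + (starRingEnd ℂ) a * b) - Complex.normSq (a + b)
    = (1 - Complex.normSq a) * (1 - Complex.normSq b) := by
  simp only [Complex.normSq_apply, Complex.add_re, Complex.add_im, Complex.mul_re, Complex.mul_im,
    Complex.one_re, Complex.one_im, Complex.conj_re, Complex.conj_im]
  ring

lemma sq_id' (z w : ℂ) : Complex.normSq (1 - (starRingEnd ℂ) w * z) - Complex.normSq (z - w)
    = (1 - Complex.normSq w) * (1 - Complex.normSq z) := by
  have key := sq_id w (-z)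
  rw [show (1 : ℂ) + (starRingEnd ℂ) w * (-z) = 1 - (starRingEnd ℂ) w * z by ring,
    show w + -z = -(z - w) by ring, Complex.normSq_neg, Complex.normSq_neg] at key
  exact key

lemma denom_ne {z w : ℂ} (hz : Complex.abs z < 1) (hw : Complex.abs w < 1) :
    (1 : ℂ) - (starRingEnd ℂ) w * z ≠ 0 := by
  have key := sq_id' z w
  have hz' : Complex.normSq z < 1 := by rw [← Complex.sq_abs]; nlinarith [Complex.abs.nonneg z]
  have hw' : Complex.normSq w < 1 := by rw [← Complex.sq_abs]; nlinarith [Complex.abs.nonneg w]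
  rw [← Complex.normSq_pos]
  nlinarith [Complex.normSq_nonneg (z - w)]

lemma rho_lt_one {z w : ℂ} (hz : Complex.abs z < 1) (hw : Complex.abs w < 1) :
    Complex.abs ((z - w) / (1 - (starRingEnd ℂ) w * z)) < 1 := by
  have key := sq_id' z w
  have hz' : Complex.normSq z < 1 := by rw [← Complex.sq_abs]; nlinarith [Complex.abs.nonneg z]
  have hw' : Complex.normSq w < 1 := by rw [← Complex.sq_abs]; nlinarith [Complex.abs.nonneg w]
  have hd := denom_ne hz hw
  have hdp := Complex.abs.pos hd
  rw [map_div₀, div_lt_one hdp]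
  rw [← Complex.sq_abs, ← Complex.sq_abs] at key
  nlinarith [Complex.abs.nonneg (z - w), Complex.abs.nonneg (1 - (starRingEnd ℂ) w * z)]

lemma Lpos {ρ : ℝ} (h0 : 0 < ρ) (h1 : ρ < 1) :
    0 < 1/2 * Real.log ((1+ρ)/(1-ρ)) := by
  have : (1:ℝ) < (1+ρ)/(1-ρ) := by rw [lt_div_iff₀ (by linarith)]; linarith
  have := Real.log_pos this
  linarith

lemma Lle {ρ : ℝ} (h0 : 0 ≤ ρ) (h1 : ρ < 1) :
    1/2 * Real.log ((1+ρ)/(1-ρ)) ≤ ρ/(1-ρ) := by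
  have hne : (1:ℝ) - ρ ≠ 0 := by intro h; linarith [h]
  have hp : (0:ℝ) < (1+ρ)/(1-ρ) := by
    apply div_pos <;> linarith
  have hlog := Real.log_le_sub_one_of_pos hp
  have he : (1+ρ)/(1-ρ) - 1 = 2*(ρ/(1-ρ)) := by field_simp; ring
  rw [he] at hlog
  linarith

lemma hasDerivAt_L {t ρ : ℝ} (h1 : (1:ℝ) + t*ρ ≠ 0) (h2 : (1:ℝ) - t*ρ ≠ 0) :
    HasDerivAt (fun s : ℝ => 1/2 * (Real.log (1+s*ρ) - Real.log (1-s*ρ)))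
      (ρ/(1-(t*ρ)^2)) t := by
  have hne : (1:ℝ) - (t*ρ)^2 ≠ 0 := by
    have := mul_ne_zero h2 h1
    intro h; apply this; nlinarith [h]
  have ha : HasDerivAt (fun s : ℝ => (1:ℝ)+s*ρ) ρ t := by
    simpa using ((hasDerivAt_id t).mul_const ρ).const_add 1
  have hb : HasDerivAt (fun s : ℝ => (1:ℝ)-s*ρ) (-ρ) t := by
    simpa using ((hasDerivAt_id t).mul_const ρ).const_sub 1
  have hA := (Real.hasDerivAt_log h1).comp t ha
  have hB := (Real.hasDerivAt_log h2).comp t hb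
  have := ((hA.sub hB).const_mul (1/2 : ℝ))
  refine this.congr_deriv ?_
  rw [eq_div_iff hne]
  field_simp
  ring

lemma comp_line {F : ℂ → ℂ} {c : ℝ → ℂ} {c' : ℂ} {t : ℝ}
    (hF : DifferentiableAt ℂ F (c t)) (hc : HasDerivAt c c' t) :
    HasDerivAt (fun s => F (c s)) (deriv F (c t) * c') t := by
  have := (hF.hasDerivAt.hasFDerivAt.restrictScalars ℝ).comp_hasDerivAt t hc
  simp [mul_comm] at this ⊢
  exact this

lemma ofReal_line (w ζ : ℂ) (t : ℝ) :
    HasDerivAt (fun s : ℝ => w + (s:ℂ)*ζ) ζ t := by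
  have h1 : HasDerivAt (fun s : ℝ => (s:ℂ)) 1 t := by
    have := Complex.ofRealCLM.hasDerivAt (x := t)
    simp at this
    exact this
  simpa using (h1.mul_const ζ).const_add w

lemma conj_deriv {u : ℝ → ℂ} {u' : ℂ} {t : ℝ} (hu : HasDerivAt u u' t) :
    HasDerivAt (fun s => (starRingEnd ℂ) (u s)) ((starRingEnd ℂ) u') t := by
  simpa using hu.star

lemma key_lip (h g : ℂ → ℂ)
    (hh : DifferentiableOn ℂ h (Metric.ball 0 1)) (hg : DifferentiableOn ℂ g (Metric.ball 0 1))
    (M : ℝ)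
    (hM : ∀ u ∈ Metric.ball (0:ℂ) 1, (1 - Complex.abs u ^ 2) *
      (Complex.abs (deriv h u) + Complex.abs (deriv g u)) ≤ M)
    {z w : ℂ} (hz : Complex.abs z < 1) (hw : Complex.abs w < 1) :
    Complex.abs ((h z + (starRingEnd ℂ) (g z)) - (h w + (starRingEnd ℂ) (g w))) ≤
      M * (1/2 * (Real.log (1 + Complex.abs ((z-w)/(1-(starRingEnd ℂ) w * z)))
        - Real.log (1 - Complex.abs ((z-w)/(1-(starRingEnd ℂ) w * z))))) := by
  set ζ : ℂ := (z-w)/(1-(starRingEnd ℂ) w * z) with hζ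
  set ρ : ℝ := Complex.abs ζ with hρ
  have hρ0 : 0 ≤ ρ := Complex.abs.nonneg ζ
  have hρ1 : ρ < 1 := rho_lt_one hz hw
  have hwnorm : Complex.abs w ^ 2 < 1 := by nlinarith [Complex.abs.nonneg w]
  -- the geodesic
  set D : ℝ → ℂ := fun t => 1 + (starRingEnd ℂ) w * ζ * (t:ℂ) with hD
  set N : ℝ → ℂ := fun t => w + (t:ℂ) * ζ with hN
  set γ : ℝ → ℂ := fun t => N t / D t with hγ
  have hDabs : ∀ t ∈ Icc (0:ℝ) 1, Complex.abs ((starRingEnd ℂ) w * ζ * (t:ℂ)) < 1 := by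
    intro t ht
    rw [map_mul, map_mul]
    have h1 : Complex.abs ((starRingEnd ℂ) w) = Complex.abs w := Complex.abs_conj w
    have h2 : Complex.abs (t:ℂ) = |t| := Complex.abs_ofReal t
    rw [h1, h2, _root_.abs_of_nonneg ht.1]
    nlinarith [Complex.abs.nonneg w, Complex.abs.nonneg ζ, ht.1, ht.2, hρ1, mul_nonneg (Complex.abs.nonneg w) (Complex.abs.nonneg ζ)]
  have hDne : ∀ t ∈ Icc (0:ℝ) 1, D t ≠ 0 := by
    intro t ht h0
    have heq : (starRingEnd ℂ) w * ζ * (t:ℂ) = -1 := by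
      rw [hD] at h0; simp at h0
      linear_combination h0
    have hlt := hDabs t ht
    rw [heq] at hlt; simp at hlt
  -- 1 - |γ t|² identity
  have hsq : ∀ t ∈ Icc (0:ℝ) 1,
      Complex.normSq (D t) - Complex.normSq (N t)
        = (1 - Complex.normSq w) * (1 - t^2 * ρ^2) := by
    intro t ht
    have := sq_id w ((t:ℂ)*ζ)
    have e1 : (1:ℂ) + (starRingEnd ℂ) w * ((t:ℂ)*ζ) = D t := by rw [hD]; ring
    have e2 : Complex.normSq ((t:ℂ)*ζ) = t^2 * ρ^2 := by
      rw [Complex.normSq_mul, Complex.normSq_ofReal, ← Complex.sq_abs ζ, ← hρ]; ring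
    rw [e1, e2] at this
    convert this using 2
  have hNlt : ∀ t ∈ Icc (0:ℝ) 1, Complex.normSq (N t) < Complex.normSq (D t) := by
    intro t ht
    have := hsq t ht
    have ht2 : t^2 * ρ^2 < 1 := by
      have ha : t^2 ≤ 1 := by nlinarith [ht.1, ht.2]
      have hb : ρ^2 < 1 := by nlinarith
      nlinarith [sq_nonneg t, sq_nonneg ρ]
    have hw2 : Complex.normSq w < 1 := by rw [← Complex.sq_abs]; exact hwnorm
    nlinarith
  have hγball : ∀ t ∈ Icc (0:ℝ) 1, γ t ∈ Metric.ball (0:ℂ) 1 := by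
    intro t ht
    rw [mem_ball_zero_iff, Complex.norm_eq_abs, hγ]
    simp only [map_div₀]
    rw [div_lt_one (Complex.abs.pos (hDne t ht))]
    have := hNlt t ht
    rw [← Complex.sq_abs, ← Complex.sq_abs] at this
    nlinarith [Complex.abs.nonneg (N t), Complex.abs.nonneg (D t)]
  -- derivative of γ
  have hγ' : ∀ t ∈ Icc (0:ℝ) 1,
      HasDerivAt γ (ζ * (1 - (starRingEnd ℂ) w * w) / (D t)^2) t := by
    intro t ht
    have hNd : HasDerivAt N ζ t := ofReal_line w ζ t
    have hDd : HasDerivAt D ((starRingEnd ℂ) w * ζ) t := by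
      have := ofReal_line 1 ((starRingEnd ℂ) w * ζ) t
      have he : (fun s:ℝ => (1:ℂ) + (s:ℂ) * ((starRingEnd ℂ) w * ζ)) = D := by
        funext s; rw [hD]; ring
      rwa [he] at this
    have := hNd.div hDd (hDne t ht)
    refine this.congr_deriv ?_
    rw [hN, hD]
    congr 1
    ring
  -- abs of γ'
  have habsγ' : ∀ t ∈ Icc (0:ℝ) 1,
      Complex.abs (ζ * (1 - (starRingEnd ℂ) w * w) / (D t)^2)
        = ρ * (1 - Complex.normSq w) / Complex.normSq (D t) := by
    intro t ht
    have e1 : (1:ℂ) - (starRingEnd ℂ) w * w = ((1 - Complex.normSq w : ℝ) : ℂ) := by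
      rw [Complex.ofReal_sub, Complex.ofReal_one]
      congr 1
      rw [← Complex.normSq_eq_conj_mul_self]
    rw [map_div₀, map_mul, e1, Complex.abs_ofReal, map_pow, Complex.sq_abs]
    have hw2 : Complex.normSq w < 1 := by rw [← Complex.sq_abs]; exact hwnorm
    rw [_root_.abs_of_nonneg (by linarith : (0:ℝ) ≤ 1 - Complex.normSq w)]
  -- the harmonic function along the geodesic
  set Φ : ℝ → ℂ := fun t => h (γ t) + (starRingEnd ℂ) (g (γ t)) with hΦdef
  set Γ : ℝ → ℂ := fun t => ζ * (1 - (starRingEnd ℂ) w * w) / (D t)^2 with hΓ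
  set Φ' : ℝ → ℂ := fun t => deriv h (γ t) * Γ t + (starRingEnd ℂ) (deriv g (γ t) * Γ t) with hΦ'def
  have hΦ' : ∀ t ∈ Icc (0:ℝ) 1, HasDerivAt Φ (Φ' t) t := by
    intro t ht
    have hball := hγball t ht
    have hhd : DifferentiableAt ℂ h (γ t) := hh.differentiableAt (isOpen_ball.mem_nhds hball)
    have hgd : DifferentiableAt ℂ g (γ t) := hg.differentiableAt (isOpen_ball.mem_nhds hball)
    exact (comp_line hhd (hγ' t ht)).add (conj_deriv (comp_line hgd (hγ' t ht)))
  have hbound : ∀ t ∈ Ico (0:ℝ) 1, ‖Φ' t‖ ≤ M * (ρ / (1 - (t*ρ)^2)) := by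
    intro t ht
    have ht' : t ∈ Icc (0:ℝ) 1 := ⟨ht.1, ht.2.le⟩
    have hball := hγball t ht'
    have hMγ := hM (γ t) hball
    have hd : (0:ℝ) < Complex.normSq (D t) := Complex.normSq_pos.2 (hDne t ht')
    have ha : (0:ℝ) < 1 - Complex.normSq w := by
      rw [← Complex.sq_abs]; linarith
    have hs : (0:ℝ) < 1 - t^2*ρ^2 := by
      have h1 : t^2 ≤ 1 := by nlinarith [ht.1, ht.2.le]
      have h2 : ρ^2 < 1 := by nlinarith
      nlinarith [sq_nonneg t, sq_nonneg ρ]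
    have hq : Complex.normSq (γ t) * Complex.normSq (D t) = Complex.normSq (N t) := by
      show Complex.normSq (N t / D t) * Complex.normSq (D t) = Complex.normSq (N t)
      rw [Complex.normSq_div, div_mul_cancel₀ _ hd.ne']
    have hγsq : 1 - Complex.abs (γ t)^2
        = (1 - Complex.normSq w) * (1 - t^2*ρ^2) / Complex.normSq (D t) := by
      rw [eq_div_iff hd.ne', Complex.sq_abs, sub_mul, one_mul, hq]
      exact hsq t ht'
    rw [hγsq] at hMγ
    have hP0 : 0 ≤ Complex.abs (deriv h (γ t)) + Complex.abs (deriv g (γ t)) := by positivity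
    have hΓt : Complex.abs (Γ t) = ρ * (1 - Complex.normSq w) / Complex.normSq (D t) :=
      habsγ' t ht'
    have htri : ‖Φ' t‖ ≤ (Complex.abs (deriv h (γ t)) + Complex.abs (deriv g (γ t)))
        * (ρ * (1 - Complex.normSq w) / Complex.normSq (D t)) := by
      rw [← hΓt]
      show Complex.abs (deriv h (γ t) * Γ t + (starRingEnd ℂ) (deriv g (γ t) * Γ t)) ≤ _
      calc Complex.abs (deriv h (γ t) * Γ t + (starRingEnd ℂ) (deriv g (γ t) * Γ t))
          ≤ Complex.abs (deriv h (γ t) * Γ t)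
            + Complex.abs ((starRingEnd ℂ) (deriv g (γ t) * Γ t)) := Complex.abs.add_le _ _
        _ = (Complex.abs (deriv h (γ t)) + Complex.abs (deriv g (γ t))) * Complex.abs (Γ t) := by
            rw [Complex.abs_conj, map_mul, map_mul]; ring
    have hmulρ : ρ * ((1 - Complex.normSq w) * (1 - t^2*ρ^2) / Complex.normSq (D t)
        * (Complex.abs (deriv h (γ t)) + Complex.abs (deriv g (γ t)))) ≤ ρ * M :=
      mul_le_mul_of_nonneg_left hMγ hρ0
    have e1 : (Complex.abs (deriv h (γ t)) + Complex.abs (deriv g (γ t)))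
        * (ρ * (1 - Complex.normSq w) / Complex.normSq (D t)) * (1 - t^2*ρ^2) ≤ ρ * M :=
      le_trans (le_of_eq (by field_simp)) hmulρ
    have e2 : (Complex.abs (deriv h (γ t)) + Complex.abs (deriv g (γ t)))
        * (ρ * (1 - Complex.normSq w) / Complex.normSq (D t)) ≤ M * ρ / (1-t^2*ρ^2) := by
      rw [le_div_iff₀ hs]; linarith [e1]
    have h2 : (t*ρ)^2 = t^2*ρ^2 := by ring
    refine htri.trans (e2.trans (le_of_eq ?_))
    rw [mul_div_assoc, h2]
  -- the boundary function
  set B : ℝ → ℝ := fun t => M * (1/2 * (Real.log (1+t*ρ) - Real.log (1-t*ρ))) with hB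
  have hpos1 : ∀ t ∈ Icc (0:ℝ) 1, (0:ℝ) < 1 + t*ρ := by
    intro t ht; nlinarith [ht.1, ht.2, hρ0]
  have hpos2 : ∀ t ∈ Icc (0:ℝ) 1, (0:ℝ) < 1 - t*ρ := by
    intro t ht; nlinarith [ht.1, ht.2, hρ0, hρ1]
  have hBcont : ContinuousOn B (Icc 0 1) := by
    intro t ht
    apply ContinuousAt.continuousWithinAt
    apply ContinuousAt.mul continuousAt_const
    apply ContinuousAt.mul continuousAt_const
    apply ContinuousAt.sub
    · exact ContinuousAt.log (by fun_prop) (hpos1 t ht).ne'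
    · exact ContinuousAt.log (by fun_prop) (hpos2 t ht).ne'
  have hB' : ∀ t ∈ Ico (0:ℝ) 1, HasDerivWithinAt B (M * (ρ/(1-(t*ρ)^2))) (Ici t) t := by
    intro t ht
    have ht' : t ∈ Icc (0:ℝ) 1 := ⟨ht.1, ht.2.le⟩
    exact ((hasDerivAt_L (hpos1 t ht').ne' (hpos2 t ht').ne').const_mul M).hasDerivWithinAt
  -- apply the fencing theorem
  have hfcont : ContinuousOn (fun t => Φ t - Φ 0) (Icc 0 1) := by
    intro t ht
    exact ((hΦ' t ht).continuousAt.sub continuousAt_const).continuousWithinAt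
  have hf' : ∀ t ∈ Ico (0:ℝ) 1, HasDerivWithinAt (fun t => Φ t - Φ 0) (Φ' t) (Ici t) t := by
    intro t ht
    exact ((hΦ' t ⟨ht.1, ht.2.le⟩).sub_const _).hasDerivWithinAt
  have ha : ‖Φ 0 - Φ 0‖ ≤ B 0 := by
    simp [hB]
  have key := image_norm_le_of_norm_deriv_right_le_deriv_boundary' hfcont hf' ha hBcont hB'
    hbound (right_mem_Icc.2 zero_le_one)
  -- endpoints
  have hγ0 : γ 0 = w := by
    rw [hγ, hN, hD]; simp
  have hγ1 : γ 1 = z := by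
    have hdz : (1:ℂ) - (starRingEnd ℂ) w * z ≠ 0 := denom_ne hz hw
    have hD1 : D 1 ≠ 0 := hDne 1 (right_mem_Icc.2 zero_le_one)
    have hζz : ζ * (1 - (starRingEnd ℂ) w * z) = z - w := by
      rw [hζ]; exact div_mul_cancel₀ _ hdz
    show N 1 / D 1 = z
    rw [div_eq_iff hD1]
    show w + ((1:ℝ):ℂ) * ζ = z * (1 + (starRingEnd ℂ) w * ζ * ((1:ℝ):ℂ))
    push_cast
    linear_combination hζz
  simp only [hΦdef, hB] at key
  rw [hγ1, hγ0] at key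
  simp only [one_mul, Complex.norm_eq_abs] at key
  exact key

lemma key_deriv (h g : ℂ → ℂ)
    (hh : DifferentiableOn ℂ h (Metric.ball 0 1)) (hg : DifferentiableOn ℂ g (Metric.ball 0 1))
    (M : ℝ) (hM0 : 0 ≤ M)
    (hM : ∀ z w : ℂ, Complex.abs z < 1 → Complex.abs w < 1 → z ≠ w →
      Complex.abs ((h z + (starRingEnd ℂ) (g z)) - (h w + (starRingEnd ℂ) (g w))) ≤
        M * (1/2 * Real.log ((1 + Complex.abs ((z-w)/(1-(starRingEnd ℂ) w * z)))
          / (1 - Complex.abs ((z-w)/(1-(starRingEnd ℂ) w * z))))))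
    {z : ℂ} (hz : Complex.abs z < 1) :
    (1 - Complex.abs z ^ 2) * (Complex.abs (deriv h z) + Complex.abs (deriv g z)) ≤ 4 * M := by
  have h1z : (0:ℝ) < 1 - Complex.abs z^2 := by nlinarith [Complex.abs.nonneg z]
  set L₀ : ℝ := 2*M/(1 - Complex.abs z^2) with hL₀
  have hL₀0 : 0 ≤ L₀ := by positivity
  -- Step A : local Lipschitz bound
  have stepA : ∀ w : ℂ, Complex.abs w < 1 → w ≠ z → Complex.abs (w - z) ≤ (1 - Complex.abs z^2)/4 →
      Complex.abs ((h w + (starRingEnd ℂ) (g w)) - (h z + (starRingEnd ℂ) (g z)))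
        ≤ L₀ * Complex.abs (w - z) := by
    intro w hw hne hclose
    set ρ := Complex.abs ((w-z)/(1-(starRingEnd ℂ) z * w)) with hρ
    have hρ0 : 0 ≤ ρ := Complex.abs.nonneg _
    have e2 : Complex.abs (1 - (starRingEnd ℂ) z * z) = 1 - Complex.abs z^2 := by
      rw [show (1:ℂ) - (starRingEnd ℂ) z * z = ((1 - Complex.normSq z : ℝ) : ℂ) by
        rw [Complex.ofReal_sub, Complex.ofReal_one]; congr 1
        rw [← Complex.normSq_eq_conj_mul_self]]
      rw [Complex.abs_ofReal, Complex.sq_abs]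
      rw [_root_.abs_of_nonneg]
      rw [← Complex.sq_abs] at *
      nlinarith [Complex.abs.nonneg z]
    have hden : (3/4) * (1 - Complex.abs z^2) ≤ Complex.abs (1 - (starRingEnd ℂ) z * w) := by
      have e : (1:ℂ) - (starRingEnd ℂ) z * z
          = (1 - (starRingEnd ℂ) z * w) + (starRingEnd ℂ) z * (w - z) := by ring
      have tri : Complex.abs (1 - (starRingEnd ℂ) z * z)
          ≤ Complex.abs (1 - (starRingEnd ℂ) z * w)
            + Complex.abs ((starRingEnd ℂ) z * (w - z)) := by
        rw [e]; exact Complex.abs.add_le _ _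
      have habs : Complex.abs ((starRingEnd ℂ) z * (w - z)) ≤ Complex.abs (w - z) := by
        rw [map_mul, Complex.abs_conj]
        nlinarith [Complex.abs.nonneg (w - z), Complex.abs.nonneg z]
      rw [e2] at tri
      linarith
    have hdenpos : (0:ℝ) < (3/4) * (1 - Complex.abs z^2) := by linarith
    have hρle : ρ ≤ Complex.abs (w - z) / ((3/4)*(1 - Complex.abs z^2)) := by
      rw [hρ, map_div₀]
      exact div_le_div_of_nonneg_left (Complex.abs.nonneg _) hdenpos hden
    have hρ13 : ρ ≤ 1/3 := by
      refine hρle.trans ?_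
      rw [div_le_iff₀ hdenpos]
      linarith
    have hρ1 : ρ < 1 := by linarith
    have hL := Lle hρ0 hρ1
    have hL2 : ρ/(1-ρ) ≤ (3/2)*ρ := by
      rw [div_le_iff₀ (by linarith)]
      nlinarith
    have hMla := hM w z hw hz hne
    rw [← hρ] at hMla
    calc Complex.abs ((h w + (starRingEnd ℂ) (g w)) - (h z + (starRingEnd ℂ) (g z)))
        ≤ M * (1/2 * Real.log ((1+ρ)/(1-ρ))) := hMla
      _ ≤ M * ((3/2)*ρ) := mul_le_mul_of_nonneg_left (hL.trans hL2) hM0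
      _ ≤ M * ((3/2) * (Complex.abs (w - z) / ((3/4)*(1 - Complex.abs z^2)))) := by
          refine mul_le_mul_of_nonneg_left ?_ hM0
          exact mul_le_mul_of_nonneg_left hρle (by norm_num)
      _ = L₀ * Complex.abs (w - z) := by
          rw [hL₀]; field_simp; ring
  -- Step B : directional derivative bound
  have stepB : ∀ v : ℂ, Complex.abs v = 1 →
      Complex.abs (deriv h z * v + (starRingEnd ℂ) (deriv g z * v)) ≤ L₀ := by
    intro v hv
    set c : ℝ → ℂ := fun t => z + (t:ℂ) * v with hc
    have hc0 : c 0 = z := by rw [hc]; simp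
    have hzball : z ∈ Metric.ball (0:ℂ) 1 := by
      rwa [mem_ball_zero_iff, Complex.norm_eq_abs]
    have hhd : DifferentiableAt ℂ h (c 0) := by
      rw [hc0]; exact hh.differentiableAt (isOpen_ball.mem_nhds hzball)
    have hgd : DifferentiableAt ℂ g (c 0) := by
      rw [hc0]; exact hg.differentiableAt (isOpen_ball.mem_nhds hzball)
    have hφ : HasDerivAt (fun t => h (c t) + (starRingEnd ℂ) (g (c t)))
        (deriv h (c 0) * v + (starRingEnd ℂ) (deriv g (c 0) * v)) 0 :=
      (comp_line hhd (ofReal_line z v 0)).add (conj_deriv (comp_line hgd (ofReal_line z v 0)))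
    rw [hc0] at hφ
    have hslope := hasDerivAt_iff_tendsto_slope.mp hφ
    set δ : ℝ := min ((1 - Complex.abs z^2)/4) ((1 - Complex.abs z)/2) with hδ
    have hδ0 : 0 < δ := lt_min (by linarith) (by linarith)
    have hevn : ∀ᶠ t in 𝓝 (0:ℝ), |t| < δ := by
      filter_upwards [Metric.ball_mem_nhds (0:ℝ) hδ0] with t ht
      simpa [Real.dist_eq] using ht
    have hev : ∀ᶠ t in 𝓝[≠] (0:ℝ),
        ‖slope (fun t => h (c t) + (starRingEnd ℂ) (g (c t))) 0 t‖ ≤ L₀ := by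
      filter_upwards [self_mem_nhdsWithin, eventually_nhdsWithin_of_eventually_nhds hevn]
        with t ht habs_t
      have htne : t ≠ 0 := ht
      have hwz : c t - z = (t:ℂ) * v := by rw [hc]; ring
      have hwabs : Complex.abs (c t - z) = |t| := by
        rw [hwz, map_mul, hv, Complex.abs_ofReal, mul_one]
      have hwball : Complex.abs (c t) < 1 := by
        have h1 : Complex.abs (c t) ≤ Complex.abs z + |t| := by
          calc Complex.abs (c t) = Complex.abs (z + (c t - z)) := by ring_nf
            _ ≤ Complex.abs z + Complex.abs (c t - z) := Complex.abs.add_le _ _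
            _ = Complex.abs z + |t| := by rw [hwabs]
        have h2 : |t| < (1 - Complex.abs z)/2 := lt_of_lt_of_le habs_t (min_le_right _ _)
        linarith
      have hwne : c t ≠ z := by
        intro hE
        apply htne
        have h0 : (t:ℂ) * v = 0 := by rw [← hwz, hE, sub_self]
        rcases mul_eq_zero.mp h0 with h0 | h0
        · exact_mod_cast Complex.ofReal_eq_zero.mp h0
        · rw [h0] at hv; simp at hv
      have hclose : Complex.abs (c t - z) ≤ (1 - Complex.abs z^2)/4 := by
        rw [hwabs]
        have := lt_of_lt_of_le habs_t (min_le_left _ _)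
        linarith
      have hA := stepA (c t) hwball hwne hclose
      rw [slope_def_module]
      rw [norm_smul]
      have hφ0 : h (c 0) + (starRingEnd ℂ) (g (c 0)) = h z + (starRingEnd ℂ) (g z) := by
        rw [hc0]
      simp only [sub_zero, hφ0]
      rw [Complex.norm_eq_abs]
      have htpos : (0:ℝ) < |t| := abs_pos.2 htne
      have hnorminv : ‖(t:ℝ)⁻¹‖ = |t|⁻¹ := by
        rw [Real.norm_eq_abs, abs_inv]
      rw [hnorminv]
      calc |t|⁻¹ * Complex.abs (h (c t) + (starRingEnd ℂ) (g (c t)) - (h z + (starRingEnd ℂ) (g z)))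
          ≤ |t|⁻¹ * (L₀ * Complex.abs (c t - z)) := by
            apply mul_le_mul_of_nonneg_left _ (by positivity)
            exact hA
        _ = |t|⁻¹ * (L₀ * |t|) := by rw [hwabs]
        _ = L₀ := by field_simp
    have hnormt := hslope.norm
    have := le_of_tendsto hnormt hev
    rwa [Complex.norm_eq_abs] at this
  -- Step C : combine directions 1 and I
  have hv1 := stepB 1 (by simp)
  have hvI := stepB Complex.I (by simpa using Complex.abs_I)
  rw [mul_one, mul_one] at hv1
  have eI : deriv h z * Complex.I + (starRingEnd ℂ) (deriv g z * Complex.I)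
      = (deriv h z - (starRingEnd ℂ) (deriv g z)) * Complex.I := by
    rw [map_mul, Complex.conj_I]; ring
  rw [eI, map_mul, Complex.abs_I, mul_one] at hvI
  have ha : 2 * Complex.abs (deriv h z) ≤ 2 * L₀ := by
    have e : (2:ℂ) * deriv h z = (deriv h z + (starRingEnd ℂ) (deriv g z))
        + (deriv h z - (starRingEnd ℂ) (deriv g z)) := by ring
    calc 2 * Complex.abs (deriv h z) = Complex.abs ((2:ℂ) * deriv h z) := by
          rw [map_mul]; norm_num
      _ ≤ _ := by rw [e]; exact (Complex.abs.add_le _ _).trans (by linarith)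
  have hb : 2 * Complex.abs (deriv g z) ≤ 2 * L₀ := by
    have e : (2:ℂ) * (starRingEnd ℂ) (deriv g z) = (deriv h z + (starRingEnd ℂ) (deriv g z))
        - (deriv h z - (starRingEnd ℂ) (deriv g z)) := by ring
    have habsconj : Complex.abs ((starRingEnd ℂ) (deriv g z)) = Complex.abs (deriv g z) :=
      Complex.abs_conj _
    calc 2 * Complex.abs (deriv g z) = Complex.abs ((2:ℂ) * (starRingEnd ℂ) (deriv g z)) := by
          rw [map_mul, habsconj]; norm_num
      _ ≤ _ := by
          rw [e, sub_eq_add_neg]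
          refine (Complex.abs.add_le _ _).trans ?_
          rw [Complex.abs.map_neg]
          linarith
  have hsum : Complex.abs (deriv h z) + Complex.abs (deriv g z) ≤ 2 * L₀ := by linarith
  calc (1 - Complex.abs z ^ 2) * (Complex.abs (deriv h z) + Complex.abs (deriv g z))
      ≤ (1 - Complex.abs z ^ 2) * (2 * L₀) := mul_le_mul_of_nonneg_left hsum (by linarith)
    _ = 4 * M := by rw [hL₀]; field_simp; ring


theorem statement14 (h g : ℂ → ℂ) (f : ℂ → ℂ)
    (hf : ∀ z, f z = h z + (starRingEnd ℂ) (g z))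
    (hh : DifferentiableOn ℂ h (Metric.ball 0 1))
    (hg : DifferentiableOn ℂ g (Metric.ball 0 1)) :
    BddAbove {y : ℝ | ∃ z ∈ Metric.ball (0 : ℂ) 1, ∃ w ∈ Metric.ball (0 : ℂ) 1,
      z ≠ w ∧ y = ‖f z - f w‖ /
        (1 / 2 * Real.log ((1 + ‖(z - w) / (1 - (starRingEnd ℂ) w * z)‖) / (1 - ‖(z - w) / (1 - (starRingEnd ℂ) w * z)‖)))}
    ↔
    BddAbove {y : ℝ | ∃ z ∈ Metric.ball (0 : ℂ) 1,
      y = (1 - ‖z‖ ^ 2) *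
        (‖deriv h z‖ + ‖deriv g z‖)} := by
  constructor
  · rintro ⟨M, hM⟩
    refine ⟨4 * max M 0, ?_⟩
    rintro y ⟨z, hz, rfl⟩
    rw [mem_ball_zero_iff, Complex.norm_eq_abs] at hz
    refine key_deriv h g hh hg (max M 0) (le_max_right _ _) ?_ hz
    intro z' w' hz' hw' hne
    have hρ1 := rho_lt_one hz' hw'
    have hρpos : 0 < Complex.abs ((z' - w') / (1 - (starRingEnd ℂ) w' * z')) := by
      apply Complex.abs.pos
      apply div_ne_zero (sub_ne_zero.2 hne) (denom_ne hz' hw')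
    have hσpos := Lpos hρpos hρ1
    have hmem := hM ⟨z', by rwa [mem_ball_zero_iff, Complex.norm_eq_abs], w',
      by rwa [mem_ball_zero_iff, Complex.norm_eq_abs], hne, rfl⟩
    simp only [Complex.norm_eq_abs] at hmem
    rw [div_le_iff₀ hσpos] at hmem
    rw [← hf z', ← hf w']
    calc Complex.abs (f z' - f w')
        ≤ M * (1 / 2 * Real.log ((1 + Complex.abs ((z' - w') / (1 - (starRingEnd ℂ) w' * z')))
          / (1 - Complex.abs ((z' - w') / (1 - (starRingEnd ℂ) w' * z'))))) := hmem
      _ ≤ max M 0 * (1 / 2 * Real.log ((1 + Complex.abs ((z' - w') / (1 - (starRingEnd ℂ) w' * z')))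
          / (1 - Complex.abs ((z' - w') / (1 - (starRingEnd ℂ) w' * z'))))) :=
          mul_le_mul_of_nonneg_right (le_max_left _ _) hσpos.le
  · rintro ⟨M, hM⟩
    refine ⟨max M 0, ?_⟩
    rintro y ⟨z, hz, w, hw, hne, rfl⟩
    have hza : Complex.abs z < 1 := by rwa [mem_ball_zero_iff, Complex.norm_eq_abs] at hz
    have hwa : Complex.abs w < 1 := by rwa [mem_ball_zero_iff, Complex.norm_eq_abs] at hw
    have hM' : ∀ u ∈ Metric.ball (0:ℂ) 1, (1 - Complex.abs u ^ 2) *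
        (Complex.abs (deriv h u) + Complex.abs (deriv g u)) ≤ max M 0 := fun u hu =>
      le_trans (hM ⟨u, hu, rfl⟩) (le_max_left _ _)
    have hkey := key_lip h g hh hg (max M 0) hM' hza hwa
    have hρ1 := rho_lt_one hza hwa
    have hρpos : 0 < Complex.abs ((z - w) / (1 - (starRingEnd ℂ) w * z)) := by
      apply Complex.abs.pos
      apply div_ne_zero (sub_ne_zero.2 hne) (denom_ne hza hwa)
    have hσpos := Lpos hρpos hρ1
    simp only [Complex.norm_eq_abs]
    rw [div_le_iff₀ hσpos, hf z, hf w]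
    have hlogeq : Real.log ((1 + Complex.abs ((z - w) / (1 - (starRingEnd ℂ) w * z)))
        / (1 - Complex.abs ((z - w) / (1 - (starRingEnd ℂ) w * z))))
        = Real.log (1 + Complex.abs ((z - w) / (1 - (starRingEnd ℂ) w * z)))
          - Real.log (1 - Complex.abs ((z - w) / (1 - (starRingEnd ℂ) w * z))) :=
      Real.log_div (by positivity) (by linarith)
    calc Complex.abs (h z + (starRingEnd ℂ) (g z) - (h w + (starRingEnd ℂ) (g w)))
        ≤ max M 0 * (1/2 * (Real.log (1 + Complex.abs ((z - w) / (1 - (starRingEnd ℂ) w * z)))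
          - Real.log (1 - Complex.abs ((z - w) / (1 - (starRingEnd ℂ) w * z))))) := hkey
      _ = max M 0 * (1/2 * Real.log ((1 + Complex.abs ((z - w) / (1 - (starRingEnd ℂ) w * z)))
          / (1 - Complex.abs ((z - w) / (1 - (starRingEnd ℂ) w * z))))) := by rw [hlogeq]
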